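/- Let r be a positive integer and a, b integers with 0 ≤ a, b < r and gcd(r,a) = gcd(r,b) = 1. Let l = min{ i : 0 < i ≤ r and i ≡ a·i ≡ b·i (mod r) }. Define g(h) = |{(s,u) ∈ ℤ≥0² : l(s+u)/r < h and s + a·u ≡ 0 (mod r)}|. Then g(h)·2/h² tends to r/l² as h → ∞. -/

import Mathlib

open Filter

set_option maxHeartbeats 1000000


lemma aux_resid (r : ℕ) (hr : 0 < r) (s m : ℕ) :
    (s + m) % r = 0 ↔ s % r = (r - m % r) % r := by
  have hk : m % r < r := Nat.mod_lt _ hr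
  have ht : s % r < r := Nat.mod_lt _ hr
  rw [Nat.add_mod]
  constructor
  · intro h
    obtain ⟨q, hq⟩ := Nat.dvd_of_mod_eq_zero h
    have hq2 : q < 2 := by
      by_contra hq2
      push_neg at hq2
      have : r * 2 ≤ r * q := Nat.mul_le_mul_left r hq2
      omega
    interval_cases q
    · have h1 : m % r = 0 := by omega
      rw [h1]
      simp [Nat.mod_self]
      omega
    · have h0 : 0 < m % r := by omega
      rw [Nat.mod_eq_of_lt (by omega : r - m % r < r)]
      omega
  · intro h
    rcases Nat.eq_zero_or_pos (m % r) with h0 | h0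
    · rw [h0] at h ⊢
      simp [Nat.mod_self] at h
      simp [h]
    · rw [Nat.mod_eq_of_lt (by omega : r - m % r < r)] at h
      have : s % r + m % r = r := by omega
      rw [this, Nat.mod_self]

lemma aux_rowlow (r : ℕ) (hr : 0 < r) (cv K : ℕ) (hc : cv < r) :
    K / r ≤ ((Finset.range K).filter (fun s => s % r = cv)).card := by
  have := Finset.card_le_card_of_injOn (f := fun j => r * j + cv)
    (s := Finset.range (K / r))
    (t := (Finset.range K).filter (fun s => s % r = cv))
    (by
      intro j hj
      simp only [Finset.mem_coe, Finset.mem_range] at hj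
      simp only [Finset.mem_coe, Finset.mem_filter, Finset.mem_range]
      constructor
      · have h1 : r * (j + 1) ≤ r * (K / r) := Nat.mul_le_mul_left r (by omega)
        have h2 : r * (K / r) ≤ K := Nat.mul_div_le K r
        rw [Nat.mul_succ] at h1
        omega
      · rw [Nat.mul_add_mod]
        exact Nat.mod_eq_of_lt hc)
    (by
      intro x _ y _ hxy
      have hxy' : r * x + cv = r * y + cv := hxy
      have : r * x = r * y := by omega
      exact Nat.eq_of_mul_eq_mul_left hr this)
  simpa using this

lemma aux_rowhi (r : ℕ) (hr : 0 < r) (cv K : ℕ) :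
    ((Finset.range K).filter (fun s => s % r = cv)).card ≤ K / r + 1 := by
  have := Finset.card_le_card_of_injOn (f := fun s => s / r)
    (s := (Finset.range K).filter (fun s => s % r = cv))
    (t := Finset.range (K / r + 1))
    (by
      intro s hs
      simp only [Finset.mem_coe, Finset.mem_filter, Finset.mem_range] at hs ⊢
      have := Nat.div_le_div_right (c := r) (le_of_lt hs.1)
      omega)
    (by
      intro x hx y hy hxy
      simp only [Finset.coe_filter, Set.mem_setOf_eq, Finset.mem_range] at hx hy
      have hxy' : x / r = y / r := hxy
      have h1 := Nat.div_add_mod x r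
      rw [hxy'] at h1
      have h2 := Nat.div_add_mod y r
      omega)
  simpa using this



lemma aux_count (r a l h : ℕ) (hr : 0 < r) (hl : 0 < l) (hh : 1 ≤ h) :
    (Nat.card {p : ℕ × ℕ // l * (p.1 + p.2) < h * r ∧ (p.1 + a * p.2) % r = 0}) =
      ∑ u ∈ Finset.range ((h * r - 1) / l + 1),
        ((Finset.range ((h * r - 1) / l + 1 - u)).filter
          (fun s => s % r = (r - (a * u) % r) % r)).card := by
  set N := (h * r - 1) / l + 1 with hN
  have hhr : 0 < h * r := Nat.mul_pos hh hr
  have hNle : N ≤ h * r := by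
    have := Nat.div_le_self (h * r - 1) l
    omega
  have hiff : ∀ t : ℕ, l * t < h * r ↔ t < N := by
    intro t
    rw [hN, Nat.lt_succ_iff, Nat.le_div_iff_mul_le hl, mul_comm t l]
    omega
  set S := (Finset.range (h * r) ×ˢ Finset.range (h * r)).filter
    (fun p : ℕ × ℕ => l * (p.1 + p.2) < h * r ∧ (p.1 + a * p.2) % r = 0) with hS
  have hmem : ∀ p : ℕ × ℕ, p ∈ S ↔
      (l * (p.1 + p.2) < h * r ∧ (p.1 + a * p.2) % r = 0) := by
    intro p
    simp only [hS, Finset.mem_filter, Finset.mem_product, Finset.mem_range]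
    have h1 : p.1 + p.2 ≤ l * (p.1 + p.2) := Nat.le_mul_of_pos_left _ hl
    constructor
    · tauto
    · intro hp
      exact ⟨⟨by omega, by omega⟩, hp⟩
  have hcard : Nat.card {p : ℕ × ℕ // l * (p.1 + p.2) < h * r ∧ (p.1 + a * p.2) % r = 0}
      = S.card := by
    rw [← Nat.card_eq_finsetCard]
    exact Nat.card_congr (Equiv.subtypeEquivRight (fun p => (hmem p).symm))
  have hdecomp : S.card = ∑ u ∈ Finset.range (h * r),
      ((Finset.range (h * r)).filter
        (fun s => l * (s + u) < h * r ∧ (s + a * u) % r = 0)).card := by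
    rw [hS, Finset.card_filter, Finset.sum_product, Finset.sum_comm]
    simp only [Finset.card_filter]
  have hrow : ∀ u : ℕ, (Finset.range (h * r)).filter
        (fun s => l * (s + u) < h * r ∧ (s + a * u) % r = 0)
      = (Finset.range (N - u)).filter (fun s => s % r = (r - (a * u) % r) % r) := by
    intro u
    ext s
    simp only [Finset.mem_filter, Finset.mem_range]
    rw [hiff (s + u), aux_resid r hr s (a * u)]
    omega
  rw [hcard, hdecomp]
  have hzero : ∀ x ∈ Finset.range (h * r), x ∉ Finset.range N →
      ((Finset.range (N - x)).filter (fun s => s % r = (r - (a * x) % r) % r)).card = 0 := by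
    intro x _ hx
    simp only [Finset.mem_range] at hx
    have : N - x = 0 := by omega
    simp [this]
  calc ∑ u ∈ Finset.range (h * r), ((Finset.range (h * r)).filter
        (fun s => l * (s + u) < h * r ∧ (s + a * u) % r = 0)).card
      = ∑ u ∈ Finset.range (h * r), ((Finset.range (N - u)).filter
        (fun s => s % r = (r - (a * u) % r) % r)).card := by
        exact Finset.sum_congr rfl (fun u _ => by rw [hrow u])
    _ = ∑ u ∈ Finset.range N, ((Finset.range (N - u)).filter
        (fun s => s % r = (r - (a * u) % r) % r)).card :=
        (Finset.sum_subset (Finset.range_subset_range.2 hNle) hzero).symm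


lemma aux_gauss (n : ℕ) : (∑ u ∈ Finset.range n, ((n:ℝ) - u)) = n*(n+1)/2 := by
  induction n with
  | zero => simp
  | succ m ih =>
    rw [Finset.sum_range_succ]
    have e : ∀ u ∈ Finset.range m, ((m:ℕ)+1:ℝ) - u = ((m:ℝ) - u) + 1 := by
      intro u _; push_cast; ring
    have : ∑ u ∈ Finset.range m, (((m:ℕ)+1:ℝ) - u)
        = (∑ u ∈ Finset.range m, ((m:ℝ) - u)) + m := by
      rw [Finset.sum_congr rfl e, Finset.sum_add_distrib, Finset.sum_const,
        Finset.card_range, nsmul_eq_mul, mul_one]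
    push_cast
    push_cast at this
    rw [this, ih]
    ring

/-- Weighted multiplicity of S₁ = ℂ²/ℤ_r(1,a) at the origin for the weighted blow up
    of ℂ³/ℤ_r(1,a,b) with weights (l/r,l/r,l/r): g(h)·2/h² → r/l². -/
theorem stmt3 (r a b : ℕ) (hr : 0 < r) (ha : a < r) (hb : b < r)
    (hca : Nat.Coprime r a) (hcb : Nat.Coprime r b) :
    ∀ l : ℕ, l = sInf {i : ℕ | 0 < i ∧ i ≤ r ∧ a * i ≡ i [MOD r] ∧ b * i ≡ i [MOD r]} →
    Tendsto (fun h : ℕ =>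
      ((Nat.card {p : ℕ × ℕ // l * (p.1 + p.2) < h * r ∧ (p.1 + a * p.2) % r = 0} : ℝ) * 2)
        / (h : ℝ) ^ 2)
      atTop (nhds ((r : ℝ) / (l : ℝ) ^ 2)) := by
  intro l hl
  -- facts about l
  have hrset : r ∈ {i : ℕ | 0 < i ∧ i ≤ r ∧ a * i ≡ i [MOD r] ∧ b * i ≡ i [MOD r]} := by
    refine ⟨hr, le_refl r, ?_, ?_⟩ <;>
    · show _ % r = _ % r
      simp [Nat.mul_mod_left, Nat.mod_self]
  have hlmem : l ∈ {i : ℕ | 0 < i ∧ i ≤ r ∧ a * i ≡ i [MOD r] ∧ b * i ≡ i [MOD r]} := by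
    rw [hl]; exact Nat.sInf_mem ⟨r, hrset⟩
  obtain ⟨hlpos, hlr, -, -⟩ := hlmem
  have hr0 : (0:ℝ) < r := by exact_mod_cast hr
  have hl0 : (0:ℝ) < l := by exact_mod_cast hlpos
  -- key bounds
  have key : ∀ h : ℕ, 1 ≤ h →
      ((h:ℝ)*r/l)^2/(2*r) - ((h:ℝ)*r/l + 1)
        ≤ (Nat.card {p : ℕ × ℕ // l * (p.1 + p.2) < h * r ∧ (p.1 + a * p.2) % r = 0} : ℝ) ∧
      (Nat.card {p : ℕ × ℕ // l * (p.1 + p.2) < h * r ∧ (p.1 + a * p.2) % r = 0} : ℝ)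
        ≤ ((h:ℝ)*r/l + 1)*((h:ℝ)*r/l + 2)/(2*r) + ((h:ℝ)*r/l + 1) := by
    intro h hh
    set N : ℕ := (h * r - 1) / l + 1 with hNdef
    have hhr : 0 < h * r := Nat.mul_pos hh hr
    have hdm := Nat.div_add_mod (h * r - 1) l
    have hml : (h * r - 1) % l < l := Nat.mod_lt _ hlpos
    have hN1 : h * r ≤ l * N := by rw [hNdef, Nat.mul_succ]; omega
    have hN2 : l * N ≤ h * r + l := by rw [hNdef, Nat.mul_succ]; omega
    have hN1R : (h:ℝ) * r ≤ l * N := by exact_mod_cast hN1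
    have hN2R : (l:ℝ) * N ≤ h * r + l := by exact_mod_cast hN2
    have hNlow : (h:ℝ)*r/l ≤ (N:ℝ) := by
      rw [div_le_iff₀ hl0]; linarith [hN1R]
    have hNhigh : (N:ℝ) ≤ (h:ℝ)*r/l + 1 := by
      rw [← mul_le_mul_iff_of_pos_right hl0]
      have e1 : ((h:ℝ)*r/l + 1) * l = (h:ℝ)*r + l := by field_simp
      rw [e1]; linarith [hN2R]
    have hN0 : (0:ℝ) ≤ (N:ℝ) := Nat.cast_nonneg N
    -- the cast count
    have hcount := aux_count r a l h hr hlpos hh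
    rw [hcount]
    push_cast [Nat.cast_sum]
    set g : ℕ → ℕ := fun u => ((Finset.range (N - u)).filter
      (fun s => s % r = (r - (a * u) % r) % r)).card with hg
    -- per-row bounds
    have hlowu : ∀ u ∈ Finset.range N, ((N:ℝ) - u)/r - 1 ≤ (g u : ℝ) := by
      intro u hu
      rw [Finset.mem_range] at hu
      have h1 : (N - u) / r ≤ g u := aux_rowlow r hr _ _ (Nat.mod_lt _ hr)
      have hdm2 := Nat.div_add_mod (N - u) r
      have hm2 : (N - u) % r < r := Nat.mod_lt _ hr
      have hc1 : ((N - u : ℕ):ℝ) = (N:ℝ) - u := by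
        push_cast [Nat.cast_sub hu.le]; ring
      have hKlt : ((N:ℝ) - u) < ((((N-u)/r : ℕ)):ℝ) * r + r := by
        rw [← hc1]
        have : ((N-u:ℕ):ℝ) = (r:ℝ) * (((N-u)/r : ℕ):ℝ) + (((N-u) % r : ℕ):ℝ) := by
          exact_mod_cast hdm2.symm
        rw [this]
        have : (((N-u) % r : ℕ):ℝ) < r := by exact_mod_cast hm2
        linarith
      have h1R : ((((N-u)/r : ℕ)):ℝ) ≤ (g u : ℝ) := by exact_mod_cast h1
      rw [div_sub_one (ne_of_gt hr0), div_le_iff₀ hr0] at *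
      nlinarith [hKlt, h1R]
    have hhighu : ∀ u ∈ Finset.range N, (g u : ℝ) ≤ ((N:ℝ) - u)/r + 1 := by
      intro u hu
      rw [Finset.mem_range] at hu
      have h1 : g u ≤ (N - u) / r + 1 := aux_rowhi r hr _ _
      have h1R : (g u : ℝ) ≤ ((((N-u)/r : ℕ)):ℝ) + 1 := by exact_mod_cast h1
      have h2 : ((((N-u)/r : ℕ)):ℝ) ≤ ((N-u:ℕ):ℝ) / r := Nat.cast_div_le
      have hc1 : ((N - u : ℕ):ℝ) = (N:ℝ) - u := by
        push_cast [Nat.cast_sub hu.le]; ring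
      rw [hc1] at h2
      linarith
    -- sum bounds
    have sumlow : (N:ℝ)*((N:ℝ)+1)/(2*r) - N ≤ ∑ u ∈ Finset.range N, (g u : ℝ) := by
      have := Finset.sum_le_sum hlowu
      have e : ∑ u ∈ Finset.range N, (((N:ℝ) - u)/r - 1)
          = (N:ℝ)*((N:ℝ)+1)/(2*r) - N := by
        rw [Finset.sum_sub_distrib, ← Finset.sum_div, aux_gauss, Finset.sum_const,
          Finset.card_range, nsmul_eq_mul, mul_one, div_div]
      linarith [this, e.symm.le]
    have sumhigh : ∑ u ∈ Finset.range N, (g u : ℝ) ≤ (N:ℝ)*((N:ℝ)+1)/(2*r) + N := by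
      have := Finset.sum_le_sum hhighu
      have e : ∑ u ∈ Finset.range N, (((N:ℝ) - u)/r + 1)
          = (N:ℝ)*((N:ℝ)+1)/(2*r) + N := by
        rw [Finset.sum_add_distrib, ← Finset.sum_div, aux_gauss, Finset.sum_const,
          Finset.card_range, nsmul_eq_mul, mul_one, div_div]
      linarith
    constructor
    · have hm : ((h:ℝ)*r/l)^2 ≤ (N:ℝ)*((N:ℝ)+1) := by
        have h0 : (0:ℝ) ≤ (h:ℝ)*r/l := by positivity
        rw [sq]
        exact (mul_le_mul hNlow hNlow h0 hN0).trans
          (mul_le_mul_of_nonneg_left (by linarith) hN0)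
      have : ((h:ℝ)*r/l)^2/(2*r) ≤ (N:ℝ)*((N:ℝ)+1)/(2*r) :=
        (div_le_div_iff_of_pos_right (by positivity)).2 hm
      linarith [sumlow, hNhigh, this]
    · have hm : (N:ℝ)*((N:ℝ)+1) ≤ ((h:ℝ)*r/l + 1)*((h:ℝ)*r/l + 2) :=
        mul_le_mul hNhigh (by linarith) (by positivity) (by positivity)
      have h2 : (N:ℝ)*((N:ℝ)+1)/(2*r) ≤ ((h:ℝ)*r/l + 1)*((h:ℝ)*r/l + 2)/(2*r) :=
        (div_le_div_iff_of_pos_right (by positivity)).2 hm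
      linarith [sumhigh, hNhigh, h2]
  -- the squeeze
  have hrne : (r:ℝ) ≠ 0 := ne_of_gt hr0
  have hlne : (l:ℝ) ≠ 0 := ne_of_gt hl0
  set F : ℝ → ℝ := fun x => ((r:ℝ)/l)^2/(2*r)*2 - ((r:ℝ)/l*x + x^2)*2 with hF
  set G : ℝ → ℝ := fun x => ((r:ℝ)/l + x)*((r:ℝ)/l + 2*x)/(2*r)*2 + ((r:ℝ)/l*x + x^2)*2 with hG
  have hx0 : Tendsto (fun h : ℕ => 1/(h:ℝ)) atTop (nhds 0) :=
    tendsto_one_div_atTop_nhds_zero_nat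
  have hFc : Continuous F := by fun_prop
  have hGc : Continuous G := by fun_prop
  have hF0 : F 0 = (r:ℝ)/(l:ℝ)^2 := by
    simp only [hF, mul_zero, zero_mul, add_zero, zero_pow, ne_eq, OfNat.ofNat_ne_zero,
      not_false_eq_true, sub_zero]
    field_simp
  have hG0 : G 0 = (r:ℝ)/(l:ℝ)^2 := by
    simp only [hG, mul_zero, zero_mul, add_zero, zero_pow, ne_eq, OfNat.ofNat_ne_zero,
      not_false_eq_true, sub_zero]
    field_simp
  have hFtend : Tendsto (fun h : ℕ => F (1/(h:ℝ))) atTop (nhds ((r:ℝ)/(l:ℝ)^2)) := by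
    have := (hFc.tendsto 0).comp hx0
    rwa [hF0] at this
  have hGtend : Tendsto (fun h : ℕ => G (1/(h:ℝ))) atTop (nhds ((r:ℝ)/(l:ℝ)^2)) := by
    have := (hGc.tendsto 0).comp hx0
    rwa [hG0] at this
  apply tendsto_of_tendsto_of_tendsto_of_le_of_le' hFtend hGtend
  · filter_upwards [eventually_ge_atTop 1] with h hh
    have hhp : (0:ℝ) < h := by exact_mod_cast hh
    have hhne : (h:ℝ) ≠ 0 := ne_of_gt hhp
    have hident : F (1/(h:ℝ))
        = (((h:ℝ)*r/l)^2/(2*r) - ((h:ℝ)*r/l + 1)) * 2 / (h:ℝ)^2 := by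
      rw [hF]
      field_simp
    rw [hident]
    have hkey := (key h hh).1
    exact (div_le_div_iff_of_pos_right (by positivity)).2 (by linarith)
  · filter_upwards [eventually_ge_atTop 1] with h hh
    have hhp : (0:ℝ) < h := by exact_mod_cast hh
    have hhne : (h:ℝ) ≠ 0 := ne_of_gt hhp
    have hident : G (1/(h:ℝ))
        = (((h:ℝ)*r/l + 1)*((h:ℝ)*r/l + 2)/(2*r) + ((h:ℝ)*r/l + 1)) * 2 / (h:ℝ)^2 := by
      rw [hG]
      field_simp
    rw [hident]
    have hkey := (key h hh).2
    exact (div_le_div_iff_of_pos_right (by positivity)).2 (by linarith)
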